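/- Let Y be a Bernoulli(α) random variable with α ∈ (0,1), α ≠ 1/2. Then the sub-Gaussian norm of Y equals σ₀ = √((α − 1/2)/ln(α/(1−α))), i.e., E[exp(t(Y − α))] ≤ exp(σ₀² t²/2) for all t ∈ ℝ, and σ₀² is the infimum of all σ² for which this holds. Moreover σ₀ < 1/2. -/

import Mathlib

open Real Set

private lemma monoAux {f f' : ℝ → ℝ} {s : Set ℝ} (hs : Convex ℝ s)
    (hd : ∀ x ∈ s, HasDerivAt f (f' x) x) (h0 : ∀ x ∈ s, 0 ≤ f' x) : MonotoneOn f s := by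
  refine monotoneOn_of_deriv_nonneg hs (fun x hx => (hd x hx).continuousAt.continuousWithinAt)
    (fun x hx => ((hd x (interior_subset hx)).differentiableAt).differentiableWithinAt)
    (fun x hx => ?_)
  rw [(hd x (interior_subset hx)).deriv]; exact h0 x (interior_subset hx)

private lemma antiAux {f f' : ℝ → ℝ} {s : Set ℝ} (hs : Convex ℝ s)
    (hd : ∀ x ∈ s, HasDerivAt f (f' x) x) (h0 : ∀ x ∈ s, f' x ≤ 0) : AntitoneOn f s := by
  refine antitoneOn_of_deriv_nonpos hs (fun x hx => (hd x hx).continuousAt.continuousWithinAt)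
    (fun x hx => ((hd x (interior_subset hx)).differentiableAt).differentiableWithinAt)
    (fun x hx => ?_)
  rw [(hd x (interior_subset hx)).deriv]; exact h0 x (interior_subset hx)

private lemma log_le_half_sub_inv {x : ℝ} (hx : 1 ≤ x) : Real.log x ≤ (x - x⁻¹)/2 := by
  set f : ℝ → ℝ := fun y => (y - y⁻¹)/2 - Real.log y with hf
  have key : MonotoneOn f (Ici 1) := by
    apply monoAux (f' := fun y => (1 + (y^2)⁻¹)/2 - y⁻¹) (convex_Ici 1)
    · intro y hy
      have hy0 : y ≠ 0 := by simp only [mem_Ici] at hy; intro h; rw [h] at hy; norm_num at hy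
      have h1 : HasDerivAt (fun y : ℝ => (y - y⁻¹)/2) ((1 - -(y^2)⁻¹)/2) y :=
        ((hasDerivAt_id y).sub (hasDerivAt_inv hy0)).div_const 2
      have h2 := h1.sub (Real.hasDerivAt_log hy0)
      refine h2.congr_deriv ?_; ring
    · intro y hy
      simp only [mem_Ici] at hy
      have hy0 : 0 < y := lt_of_lt_of_le one_pos hy
      have : (1 + (y^2)⁻¹)/2 - y⁻¹ = (y-1)^2 / (2*y^2) := by field_simp; ring
      rw [this]; positivity
  have h1 : f 1 ≤ f x := key (by simp) (by simpa using hx) hx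
  simp only [hf, Real.log_one] at h1
  norm_num at h1
  linarith

private lemma lt_log_of_one_lt {x : ℝ} (hx : 1 < x) : 2*(x-1)/(x+1) < Real.log x := by
  set f : ℝ → ℝ := fun y => Real.log y - 2*(y-1)/(y+1) with hf
  have key : StrictMonoOn f (Ici 1) := by
    apply strictMonoOn_of_deriv_pos (convex_Ici 1)
    · intro y hy
      simp only [mem_Ici] at hy
      have hy0 : y ≠ 0 := by positivity
      have hy1 : y + 1 ≠ 0 := by positivity
      exact ((Real.continuousAt_log hy0).sub ((continuousAt_id.sub continuousAt_const).const_mul 2 |>.div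
        (continuousAt_id.add continuousAt_const) hy1)).continuousWithinAt
    · intro y hy
      rw [interior_Ici] at hy
      simp only [mem_Ioi] at hy
      have hy0 : y ≠ 0 := by positivity
      have hy1 : y + 1 ≠ 0 := by positivity
      have hd : HasDerivAt f ((y-1)^2/(y*(y+1)^2)) y := by
        have h := (Real.hasDerivAt_log hy0).sub
          ((((hasDerivAt_id y).sub_const 1).const_mul 2).div ((hasDerivAt_id y).add_const 1) hy1)
        refine h.congr_deriv ?_
        simp only [id_eq]
        field_simp
        ring
      rw [hd.deriv]
      have h1 : 0 < (y-1)^2 := pow_pos (by linarith) 2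
      positivity
  have h1 : f 1 < f x := key (by simp) (by simp [le_of_lt hx]) hx
  simp only [hf, Real.log_one] at h1
  norm_num at h1
  linarith


private noncomputable def KSD (p t : ℝ) : ℝ := 1 - p + p * Real.exp t
private noncomputable def KSu (p t : ℝ) : ℝ := p * Real.exp t / KSD p t
private noncomputable def KSG (p c t : ℝ) : ℝ := c*t^2/2 - Real.log (KSD p t) + p*t
private noncomputable def KSG' (p c t : ℝ) : ℝ := c*t - KSu p t + p

variable {p c : ℝ}

private lemma KSD_pos (h0 : 0 < p) (h1 : p < 1) (t : ℝ) : 0 < KSD p t := by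
  have := Real.exp_pos t
  unfold KSD; nlinarith

private lemma KSu_pos (h0 : 0 < p) (h1 : p < 1) (t : ℝ) : 0 < KSu p t :=
  div_pos (by positivity) (KSD_pos h0 h1 t)

private lemma KSu_lt_one (h0 : 0 < p) (h1 : p < 1) (t : ℝ) : KSu p t < 1 := by
  rw [KSu, div_lt_one (KSD_pos h0 h1 t), KSD]; linarith

private lemma KSu_strictMono (h0 : 0 < p) (h1 : p < 1) : StrictMono (KSu p) := by
  intro s t hst
  rw [KSu, KSu, div_lt_div_iff₀ (KSD_pos h0 h1 s) (KSD_pos h0 h1 t), KSD, KSD]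
  have he : Real.exp s < Real.exp t := Real.exp_lt_exp.2 hst
  have key : p*(1-p)*Real.exp s < p*(1-p)*Real.exp t :=
    mul_lt_mul_of_pos_left he (by nlinarith)
  nlinarith [key]

private lemma hasDerivAt_KSD (t : ℝ) : HasDerivAt (KSD p) (p * Real.exp t) t := by
  have := ((Real.hasDerivAt_exp t).const_mul p).const_add (1 - p)
  exact this

private lemma hasDerivAt_KSu (h0 : 0 < p) (h1 : p < 1) (t : ℝ) :
    HasDerivAt (KSu p) (KSu p t * (1 - KSu p t)) t := by
  have h := ((Real.hasDerivAt_exp t).const_mul p).div (hasDerivAt_KSD t) (KSD_pos h0 h1 t).ne'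
  refine h.congr_deriv ?_
  have hD := (KSD_pos h0 h1 t).ne'
  rw [KSu]
  field_simp

private lemma hasDerivAt_KSG (h0 : 0 < p) (h1 : p < 1) (t : ℝ) :
    HasDerivAt (KSG p c) (KSG' p c t) t := by
  have h1' : HasDerivAt (fun t : ℝ => c*t^2/2) (c * t) t := by
    have := ((hasDerivAt_pow 2 t).const_mul c).div_const 2
    refine this.congr_deriv ?_
    norm_num
    ring
  have h2 : HasDerivAt (fun t : ℝ => Real.log (KSD p t)) (p * Real.exp t / KSD p t) t :=
    (hasDerivAt_KSD t).log (KSD_pos h0 h1 t).ne'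
  have h3 : HasDerivAt (fun t : ℝ => p * t) p t := by
    simpa using (hasDerivAt_id t).const_mul p
  exact (h1'.sub h2).add h3

private lemma hasDerivAt_KSG' (h0 : 0 < p) (h1 : p < 1) (t : ℝ) :
    HasDerivAt (KSG' p c) (c - KSu p t * (1 - KSu p t)) t := by
  have h1' : HasDerivAt (fun t : ℝ => c*t) c t := by simpa using (hasDerivAt_id t).const_mul c
  exact (h1'.sub (hasDerivAt_KSu h0 h1 t)).add_const p

private lemma KSu_eq {p : ℝ} (h0 : 0 < p) (h1 : p < 1) {v t : ℝ} (hv0 : 0 < v) (hv1 : v < 1)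
    (ht : Real.exp t = v*(1-p)/((1-v)*p)) : KSu p t = v := by
  have hD := KSD_pos h0 h1 t
  have hv1' : (1:ℝ) - v ≠ 0 := by linarith
  have hp : p ≠ 0 := h0.ne'
  rw [KSu, eq_comm, eq_div_iff hD.ne', KSD, ht]
  field_simp
  ring

set_option maxHeartbeats 2000000 in
private lemma KSG_nonneg {p : ℝ} (h0 : 0 < p) (h1 : p < 1/2) (t : ℝ) :
    0 ≤ KSG p ((1/2 - p)/Real.log ((1-p)/p)) t := by
  have hp1 : p < 1 := by linarith
  have hp1' : 0 < 1 - p := by linarith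
  have hx1 : 1 < (1-p)/p := by rw [lt_div_iff₀ h0]; linarith
  set L : ℝ := Real.log ((1-p)/p) with hLdef
  have hL0 : 0 < L := Real.log_pos hx1
  set c : ℝ := (1/2 - p)/L with hcdef
  have hc0 : 0 < c := div_pos (by linarith) hL0
  have hcL : c * L = 1/2 - p := div_mul_cancel₀ _ hL0.ne'
  have hc4 : c < 1/4 := by
    have h := lt_log_of_one_lt hx1
    have he : 2*((1-p)/p - 1)/((1-p)/p + 1) = 2*(1-2*p) := by
      rw [div_eq_iff (by positivity)]
      field_simp
      ring
    rw [he, ← hLdef] at h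
    rw [hcdef, div_lt_iff₀ hL0]
    linarith
  have hpc : p * (1-p) ≤ c := by
    have h := log_le_half_sub_inv hx1.le
    have he : ((1-p)/p - ((1-p)/p)⁻¹)/2 = (1/2 - p)/(p*(1-p)) := by
      rw [inv_div]
      field_simp
      ring
    rw [he, ← hLdef] at h
    rw [hcdef, le_div_iff₀ hL0]
    calc p*(1-p)*L ≤ p*(1-p)*((1/2-p)/(p*(1-p))) :=
          mul_le_mul_of_nonneg_left h (by positivity)
      _ = 1/2 - p := by field_simp
  set D : ℝ := Real.sqrt (1 - 4*c) with hDdef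
  have hDsq : D^2 = 1 - 4*c := Real.sq_sqrt (by linarith)
  have hD0 : 0 < D := Real.sqrt_pos.2 (by linarith)
  have hD1 : D < 1 := by nlinarith [sq_nonneg (D - 1)]
  set u₁ : ℝ := (1 - D)/2 with hu1def
  set u₂ : ℝ := (1 + D)/2 with hu2def
  have hsum : u₁ + u₂ = 1 := by rw [hu1def, hu2def]; ring
  have hprod : u₁ * u₂ = c := by rw [hu1def, hu2def]; linear_combination (-1/4)*hDsq
  have hu₁0 : 0 < u₁ := by rw [hu1def]; linarith
  have hu₁h : u₁ ≤ 1/2 := by rw [hu1def]; linarith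
  have hu₂h : 1/2 ≤ u₂ := by rw [hu2def]; linarith
  have hu₂1 : u₂ < 1 := by rw [hu2def]; linarith
  have hu₂0 : 0 < u₂ := by linarith
  have hu₁u₂ : u₁ ≤ u₂ := by linarith
  have hpu₁ : p ≤ u₁ := by
    by_contra hcon
    push_neg at hcon
    have h := mul_pos (sub_pos.2 hcon) (show 0 < 1 - p - u₁ by linarith)
    have hexp : (p - u₁)*(1 - p - u₁) = p*(1-p) - u₁*u₂ := by linear_combination u₁*hsum
    rw [hexp] at h
    linarith
  have hu₂p : u₂ ≤ 1 - p := by linarith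
  set t₁ : ℝ := Real.log (u₁*(1-p)/(u₂*p)) with ht1def
  set t₂ : ℝ := Real.log (u₂*(1-p)/(u₁*p)) with ht2def
  have hexpt₁ : Real.exp t₁ = u₁*(1-p)/((1-u₁)*p) := by
    rw [ht1def, Real.exp_log (by positivity), show (1:ℝ)-u₁ = u₂ by linarith]
  have hexpt₂ : Real.exp t₂ = u₂*(1-p)/((1-u₂)*p) := by
    rw [ht2def, Real.exp_log (by positivity), show (1:ℝ)-u₂ = u₁ by linarith]
  have hexp2L : Real.exp (2*L) = (1-p)*(1-p)/((1-(1-p))*p) := by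
    rw [hLdef, show (2:ℝ)*Real.log ((1-p)/p) = Real.log ((1-p)/p) + Real.log ((1-p)/p) by ring,
      Real.exp_add, Real.exp_log (by positivity)]
    field_simp
    simp [h0.ne']
  have hu0 : KSu p 0 = p :=
    KSu_eq h0 hp1 h0 hp1 (by rw [Real.exp_zero, eq_comm, div_eq_one_iff_eq (by positivity)]; ring)
  have hut₁ : KSu p t₁ = u₁ := KSu_eq h0 hp1 hu₁0 (by linarith) hexpt₁
  have hut₂ : KSu p t₂ = u₂ := KSu_eq h0 hp1 hu₂0 hu₂1 hexpt₂
  have hu2L : KSu p (2*L) = 1 - p := KSu_eq h0 hp1 hp1' (by linarith) hexp2L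
  have hmono := KSu_strictMono h0 hp1
  have h0t₁ : (0:ℝ) ≤ t₁ := by
    rw [← hmono.le_iff_le, hu0, hut₁]; exact hpu₁
  have ht₁t₂ : t₁ ≤ t₂ := by
    rw [← hmono.le_iff_le, hut₁, hut₂]; exact hu₁u₂
  have ht₂2L : t₂ ≤ 2*L := by
    rw [← hmono.le_iff_le, hut₂, hu2L]; exact hu₂p
  have hGsec : ∀ s : ℝ, c - KSu p s * (1 - KSu p s) = (KSu p s - u₁) * (KSu p s - u₂) := by
    intro s
    linear_combination (KSu p s) * hsum - hprod
  have hG0 : KSG p c 0 = 0 := by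
    simp [KSG, KSD]
  have hG'0 : KSG' p c 0 = 0 := by
    rw [KSG', hu0]; ring
  have hG2L : KSG p c (2*L) = 0 := by
    have hDL : KSD p (2*L) = (1-p)/p := by
      rw [KSD, hexp2L]; field_simp [h0.ne']; ring
    rw [KSG, hDL, ← hLdef]
    linear_combination (2*L)*hcL
  have hG'2L : KSG' p c (2*L) = 0 := by
    rw [KSG', hu2L]
    linear_combination 2*hcL
  have hM1 : MonotoneOn (KSG' p c) (Iic t₁) := by
    refine monoAux (f' := fun x => c - KSu p x * (1 - KSu p x)) (convex_Iic t₁)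
      (fun x _ => hasDerivAt_KSG' h0 hp1 x) (fun x hx => ?_)
    have hux : KSu p x ≤ u₁ := by rw [← hut₁]; exact hmono.monotone hx
    show 0 ≤ c - KSu p x * (1 - KSu p x)
    rw [hGsec x]
    have h := mul_nonneg (sub_nonneg.2 hux) (sub_nonneg.2 (hux.trans hu₁u₂))
    have hexp : (u₁ - KSu p x)*(u₂ - KSu p x) = (KSu p x - u₁)*(KSu p x - u₂) := by ring
    rw [hexp] at h
    exact h
  have hM3 : MonotoneOn (KSG' p c) (Ici t₂) := by
    refine monoAux (f' := fun x => c - KSu p x * (1 - KSu p x)) (convex_Ici t₂)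
      (fun x _ => hasDerivAt_KSG' h0 hp1 x) (fun x hx => ?_)
    have hux : u₂ ≤ KSu p x := by rw [← hut₂]; exact hmono.monotone hx
    show 0 ≤ c - KSu p x * (1 - KSu p x)
    rw [hGsec x]
    exact mul_nonneg (by linarith) (by linarith)
  have hM4 : AntitoneOn (KSG' p c) (Icc t₁ t₂) := by
    refine antiAux (f' := fun x => c - KSu p x * (1 - KSu p x)) (convex_Icc t₁ t₂)
      (fun x _ => hasDerivAt_KSG' h0 hp1 x) (fun x hx => ?_)
    have hux1 : u₁ ≤ KSu p x := by rw [← hut₁]; exact hmono.monotone hx.1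
    have hux2 : KSu p x ≤ u₂ := by rw [← hut₂]; exact hmono.monotone hx.2
    show c - KSu p x * (1 - KSu p x) ≤ 0
    rw [hGsec x]
    exact mul_nonpos_of_nonneg_of_nonpos (by linarith) (by linarith)
  have hA : ∀ s : ℝ, s ≤ 0 → 0 ≤ KSG p c s := by
    intro s hs
    have hanti : AntitoneOn (KSG p c) (Iic (0:ℝ)) := by
      refine antiAux (f' := KSG' p c) (convex_Iic 0)
        (fun x _ => hasDerivAt_KSG h0 hp1 x) (fun x hx => ?_)
      have := hM1 (show x ∈ Iic t₁ from le_trans hx h0t₁) h0t₁ hx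
      rw [hG'0] at this; exact this
    have := hanti (show s ∈ Iic (0:ℝ) from hs) self_mem_Iic hs
    rw [hG0] at this; exact this
  have hB : ∀ s : ℝ, s ∈ Icc 0 t₁ → 0 ≤ KSG p c s := by
    intro s hs
    have hmonoG : MonotoneOn (KSG p c) (Icc (0:ℝ) t₁) := by
      refine monoAux (f' := KSG' p c) (convex_Icc 0 t₁)
        (fun x _ => hasDerivAt_KSG h0 hp1 x) (fun x hx => ?_)
      have := hM1 (show (0:ℝ) ∈ Iic t₁ from h0t₁) (show x ∈ Iic t₁ from hx.2) hx.1
      rw [hG'0] at this; exact this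
    have := hmonoG (left_mem_Icc.2 h0t₁) hs hs.1
    rw [hG0] at this; exact this
  have hGt₁ : 0 ≤ KSG p c t₁ := hB t₁ (right_mem_Icc.2 h0t₁)
  have hC : ∀ s : ℝ, s ∈ Icc t₂ (2*L) → 0 ≤ KSG p c s := by
    intro s hs
    have hantiG : AntitoneOn (KSG p c) (Icc t₂ (2*L)) := by
      refine antiAux (f' := KSG' p c) (convex_Icc t₂ (2*L))
        (fun x _ => hasDerivAt_KSG h0 hp1 x) (fun x hx => ?_)
      have := hM3 (show x ∈ Ici t₂ from hx.1) (show 2*L ∈ Ici t₂ from ht₂2L) hx.2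
      rw [hG'2L] at this; exact this
    have := hantiG hs (right_mem_Icc.2 ht₂2L) hs.2
    rw [hG2L] at this; exact this
  have hGt₂ : 0 ≤ KSG p c t₂ := hC t₂ (left_mem_Icc.2 ht₂2L)
  have hD2 : ∀ s : ℝ, 2*L ≤ s → 0 ≤ KSG p c s := by
    intro s hs
    have hmonoG : MonotoneOn (KSG p c) (Ici (2*L)) := by
      refine monoAux (f' := KSG' p c) (convex_Ici (2*L))
        (fun x _ => hasDerivAt_KSG h0 hp1 x) (fun x hx => ?_)
      have := hM3 (show 2*L ∈ Ici t₂ from ht₂2L) (show x ∈ Ici t₂ from le_trans ht₂2L hx) hx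
      rw [hG'2L] at this; exact this
    have := hmonoG self_mem_Ici hs hs
    rw [hG2L] at this; exact this
  have hE : ∀ s : ℝ, s ∈ Icc t₁ t₂ → 0 ≤ KSG p c s := by
    intro s hs
    rcases le_or_gt 0 (KSG' p c s) with hpos | hneg
    · have hmonoG : MonotoneOn (KSG p c) (Icc t₁ s) := by
        refine monoAux (f' := KSG' p c) (convex_Icc t₁ s)
          (fun x _ => hasDerivAt_KSG h0 hp1 x) (fun x hx => ?_)
        have hxm : x ∈ Icc t₁ t₂ := ⟨hx.1, le_trans hx.2 hs.2⟩
        have := hM4 hxm hs hx.2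
        linarith
      have := hmonoG (left_mem_Icc.2 hs.1) (right_mem_Icc.2 hs.1) hs.1
      linarith
    · have hantiG : AntitoneOn (KSG p c) (Icc s t₂) := by
        refine antiAux (f' := KSG' p c) (convex_Icc s t₂)
          (fun x _ => hasDerivAt_KSG h0 hp1 x) (fun x hx => ?_)
        have hxm : x ∈ Icc t₁ t₂ := ⟨le_trans hs.1 hx.1, hx.2⟩
        have := hM4 hs hxm hx.1
        linarith
      have := hantiG (left_mem_Icc.2 hs.2) (right_mem_Icc.2 hs.2) hs.2
      linarith
  rcases le_total t 0 with h | h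
  · exact hA t h
  rcases le_total t t₁ with h1' | h1'
  · exact hB t ⟨h, h1'⟩
  rcases le_total t t₂ with h2' | h2'
  · exact hE t ⟨h1', h2'⟩
  rcases le_total t (2*L) with h3' | h3'
  · exact hC t ⟨h2', h3'⟩
  · exact hD2 t h3'

private lemma KS_const_lt {p : ℝ} (h0 : 0 < p) (h1 : p < 1/2) :
    (1/2 - p)/Real.log ((1-p)/p) < 1/4 := by
  have hp1' : 0 < 1 - p := by linarith
  have hx1 : 1 < (1-p)/p := by rw [lt_div_iff₀ h0]; linarith
  have hL0 : 0 < Real.log ((1-p)/p) := Real.log_pos hx1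
  have h := lt_log_of_one_lt hx1
  have he : 2*((1-p)/p - 1)/((1-p)/p + 1) = 2*(1-2*p) := by
    rw [div_eq_iff (by positivity)]; field_simp; ring
  rw [he] at h
  rw [div_lt_iff₀ hL0]
  linarith

private lemma kearns_saul {p : ℝ} (h0 : 0 < p) (h1 : p < 1/2) (t : ℝ) :
    (1-p) * Real.exp (t*(0-p)) + p * Real.exp (t*(1-p)) ≤
      Real.exp ((1/2 - p)/Real.log ((1-p)/p) * t^2/2) := by
  have hp1 : p < 1 := by linarith
  have hG := KSG_nonneg h0 h1 t
  have hDpos := KSD_pos h0 hp1 t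
  rw [KSG] at hG
  have lhs_eq : (1-p) * Real.exp (t*(0-p)) + p * Real.exp (t*(1-p)) =
      Real.exp (Real.log (KSD p t) - p*t) := by
    rw [Real.exp_sub, Real.exp_log hDpos, KSD, eq_div_iff (Real.exp_pos (p*t)).ne',
      add_mul, mul_assoc, mul_assoc, ← Real.exp_add, ← Real.exp_add,
      show t*(0-p)+p*t = 0 by ring, show t*(1-p)+p*t = t by ring, Real.exp_zero]
    ring
  rw [lhs_eq]
  exact Real.exp_le_exp.2 (by linarith)

theorem bernoulli_subgaussian_norm (α : ℝ) (hα : α ∈ Set.Ioo (0:ℝ) 1) (hα2 : α ≠ 1/2)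
    (σ₀ : ℝ) (hσ₀ : σ₀ = Real.sqrt ((α - 1/2) / Real.log (α / (1 - α)))) :
    (∀ t : ℝ, (1 - α) * Real.exp (t * (0 - α)) + α * Real.exp (t * (1 - α))
        ≤ Real.exp (σ₀ ^ 2 * t ^ 2 / 2)) ∧
    σ₀ ^ 2 = sInf {v : ℝ | 0 ≤ v ∧ ∀ t : ℝ,
        (1 - α) * Real.exp (t * (0 - α)) + α * Real.exp (t * (1 - α))
          ≤ Real.exp (v * t ^ 2 / 2)} ∧
    σ₀ < 1/2 := by
  obtain ⟨hα0, hα1⟩ := hα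
  have h1α : 0 < 1 - α := by linarith
  set q : ℝ := (α - 1/2) / Real.log (α / (1 - α)) with hqdef
  have hratio : α / (1-α) ≠ 1 := by
    intro h; rw [div_eq_one_iff_eq h1α.ne'] at h; apply hα2; linarith
  have hlogne : Real.log (α/(1-α)) ≠ 0 := by
    intro h
    rcases Real.log_eq_zero.1 h with h' | h' | h'
    · exact absurd h' (show (0:ℝ) < α/(1-α) by positivity).ne'
    · exact hratio h'
    · nlinarith [div_pos hα0 h1α]
  have hloginv : Real.log (α/(1-α)) = - Real.log ((1-α)/α) := by
    rw [← Real.log_inv]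
    congr 1
    rw [inv_div]
  have hMne : Real.log ((1-α)/α) ≠ 0 := by
    intro h; apply hlogne; rw [hloginv, h, neg_zero]
  have hqalt : q = (1/2 - α)/Real.log ((1-α)/α) := by
    rw [hqdef, hloginv]
    field_simp
    ring
  have part1 : ∀ t : ℝ, (1-α)*Real.exp (t*(0-α)) + α*Real.exp (t*(1-α))
      ≤ Real.exp (q * t^2/2) := by
    rcases lt_or_gt_of_ne hα2 with hlt | hgt
    · intro t
      have h := kearns_saul hα0 hlt t
      rw [← hqalt] at h
      exact h
    · intro t
      have h := kearns_saul h1α (by linarith : (1:ℝ) - α < 1/2) (-t)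
      rw [show (-t)*((0:ℝ)-(1-α)) = t*(1-α) by ring,
        show (-t)*((1:ℝ)-(1-α)) = t*(0-α) by ring,
        show ((1:ℝ)-(1-α)) = α by ring,
        show ((1:ℝ)/2-(1-α)) = α - 1/2 by ring,
        show ((-t)^2 : ℝ) = t^2 by ring, ← hqdef] at h
      linarith
  set M : ℝ := Real.log ((1-α)/α) with hMdef
  have hexpM : Real.exp M = (1-α)/α := Real.exp_log (by positivity)
  have heq : (1-α)*Real.exp ((2*M)*(0-α)) + α*Real.exp ((2*M)*(1-α))
      = Real.exp (q*(2*M)^2/2) := by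
    have hLHS : (1-α)*Real.exp ((2*M)*(0-α)) + α*Real.exp ((2*M)*(1-α))
        = Real.exp ((2*M)*(0-α) + M) := by
      rw [show (2*M)*((1:ℝ)-α) = ((2*M)*(0-α) + M) + M by ring, Real.exp_add,
        Real.exp_add, hexpM]
      field_simp
      ring
    rw [hLHS]
    congr 1
    rw [hqalt]
    field_simp
    ring
  have hq0 : 0 ≤ q := by
    rcases lt_or_gt_of_ne hα2 with hlt | hgt
    · have hden : Real.log (α/(1-α)) < 0 :=
        Real.log_neg (by positivity) (by rw [div_lt_one h1α]; linarith)
      rw [hqdef]; exact le_of_lt (div_pos_of_neg_of_neg (by linarith) hden)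
    · have hden : 0 < Real.log (α/(1-α)) :=
        Real.log_pos (by rw [lt_div_iff₀ h1α]; linarith)
      rw [hqdef]; exact le_of_lt (div_pos (by linarith) hden)
  have hσq : σ₀^2 = q := by rw [hσ₀, Real.sq_sqrt hq0]
  have hq4 : q < 1/4 := by
    rcases lt_or_gt_of_ne hα2 with hlt | hgt
    · rw [hqalt]; exact KS_const_lt hα0 hlt
    · have h := KS_const_lt h1α (by linarith : (1:ℝ) - α < 1/2)
      rw [show ((1:ℝ)/2-(1-α)) = α - 1/2 by ring, show ((1:ℝ)-(1-α)) = α by ring,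
        ← hqdef] at h
      exact h
  have hM2 : 0 < M^2 := lt_of_le_of_ne (sq_nonneg M) (Ne.symm (pow_ne_zero 2 hMne))
  refine ⟨by rw [hσq] at *; exact part1, ?_, ?_⟩
  · rw [hσq]
    apply le_antisymm
    · refine le_csInf ⟨q, ⟨hq0, part1⟩⟩ fun b hb => ?_
      have h2 := hb.2 (2*M)
      rw [heq] at h2
      have h3 := Real.exp_le_exp.1 h2
      rw [show q*(2*M)^2/2 = q*(2*M^2) by ring, show b*(2*M)^2/2 = b*(2*M^2) by ring] at h3
      exact le_of_mul_le_mul_right h3 (by linarith)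
    · exact csInf_le ⟨0, fun v hv => hv.1⟩ ⟨hq0, part1⟩
  · rw [hσ₀]
    refine (Real.sqrt_lt' (by norm_num)).2 ?_
    norm_num
    linarith
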